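/- The CADI-CADI discount function satisfies the weak total delay CADI condition: for all t₁, t₂, T₁, T₂ and all σ, if F(t₁,T₁) = F(t₂,T₂) then F(t₁+σ,T₁) = F(t₂+σ,T₂). -/

import Mathlib

theorem cadi_cadi_weak_total_delay_CADI (r δ γ : ℝ) (hr : 0 < r) (hδ : 0 < δ) (hγ : γ ≠ 0)
    (F : ℝ → ℝ → ℝ)
    (hF : ∀ t T, F t T = Real.exp (-r * Real.exp (-δ * t) * (1 - Real.exp (-γ * T)) / γ))
    (t₁ t₂ T₁ T₂ σ : ℝ)
    (h : F t₁ T₁ = F t₂ T₂) :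
    F (t₁ + σ) T₁ = F (t₂ + σ) T₂ := by
  simp only [hF] at h ⊢
  have h' := Real.exp_injective h
  congr 1
  have e1 : -δ * (t₁ + σ) = -δ * t₁ + -δ * σ := by ring
  have e2 : -δ * (t₂ + σ) = -δ * t₂ + -δ * σ := by ring
  rw [e1, e2, Real.exp_add, Real.exp_add]
  field_simp [hγ] at h' ⊢
  linear_combination h'
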